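/- Let C_0 ⊆ F_2^n have minimum weight at least 4 and set C = Span{d(E_n), e(C_0)}. If u = e(y) + d(z) and u' = e(y') + d(z') are weight-4 codewords of C with y, y' ∈ C_0 of weight 4, and |supp(u) ∩ supp(u')| = 2, then |supp(y) ∩ supp(y')| ∈ {2, 4}. -/

import Mathlib

/-- Hamming weight of a binary word. -/
def wt {n : ℕ} (v : Fin n → ZMod 2) : ℕ :=
  (Finset.univ.filter (fun i => v i ≠ 0)).card

/-- Size of the intersection of the supports of two binary words. -/
def interCard {n : ℕ} (v w : Fin n → ZMod 2) : ℕ :=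
  (Finset.univ.filter (fun i => v i ≠ 0 ∧ w i ≠ 0)).card

/-- The doubling map `d : F₂ⁿ → F₂^{2n}`, `(c₁,…,cₙ) ↦ (c₁,c₁,c₂,c₂,…,cₙ,cₙ)`. -/
def dbl {n : ℕ} (c : Fin n → ZMod 2) : Fin (2 * n) → ZMod 2 :=
  fun i => c ⟨(i : ℕ) / 2, by have := i.isLt; omega⟩

/-- The map `e : F₂ⁿ → F₂^{2n}`, `(c₁,…,cₙ) ↦ (0,c₁,0,c₂,…,0,cₙ)`. -/
def emap {n : ℕ} (c : Fin n → ZMod 2) : Fin (2 * n) → ZMod 2 :=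
  fun i => if (i : ℕ) % 2 = 1 then c ⟨(i : ℕ) / 2, by have := i.isLt; omega⟩ else 0

/-- The even-weight code `𝓔ₙ ⊆ F₂ⁿ`. -/
def evenCode (n : ℕ) : Set (Fin n → ZMod 2) := {c | Even (wt c)}

lemma wt_add_aux {n : ℕ} (v w : Fin n → ZMod 2) :
    wt (v + w) + 2 * interCard v w = wt v + wt w := by
  unfold wt interCard
  simp only [Finset.card_filter, Finset.mul_sum, ← Finset.sum_add_distrib]
  refine Finset.sum_congr rfl fun i _ => ?_
  simp only [Pi.add_apply]
  have : ∀ a b : ZMod 2,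
      (if a + b ≠ 0 then 1 else 0) + 2 * (if a ≠ 0 ∧ b ≠ 0 then 1 else 0)
        = (if a ≠ 0 then 1 else 0) + (if b ≠ 0 then 1 else 0) := by decide
  exact this (v i) (w i)

lemma interCard_self {n : ℕ} (v : Fin n → ZMod 2) : interCard v v = wt v := by
  unfold wt interCard
  simp [and_self]

lemma eval_even {n : ℕ} (c e : Fin n → ZMod 2) (i : Fin (2 * n))
    (h : (i : ℕ) % 2 = 0) (k : Fin n) (hk : (k : ℕ) = (i : ℕ) / 2) :
    (emap c + dbl e) i = e k := by
  have hkk : k = ⟨(i : ℕ) / 2, by have := i.isLt; omega⟩ := Fin.ext hk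
  rw [hkk]
  show (if (i : ℕ) % 2 = 1 then c _ else 0) + e _ = _
  rw [if_neg (by omega), zero_add]

lemma eval_odd {n : ℕ} (c e : Fin n → ZMod 2) (i : Fin (2 * n))
    (h : (i : ℕ) % 2 = 1) (k : Fin n) (hk : (k : ℕ) = (i : ℕ) / 2) :
    (emap c + dbl e) i = c k + e k := by
  have hkk : k = ⟨(i : ℕ) / 2, by have := i.isLt; omega⟩ := Fin.ext hk
  rw [hkk]
  show (if (i : ℕ) % 2 = 1 then c _ else 0) + e _ = _
  rw [if_pos h]

/-- with `C₀` of minimum weight at least 4, if `u = e(y) + d(z)` and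
`u' = e(y') + d(z')` are weight-4 codewords of `C = Span{d(𝓔ₙ), e(C₀)}` with
`y, y' ∈ C₀` of weight 4 and `|supp u ∩ supp u'| = 2`, then `|supp y ∩ supp y'| ∈ {2, 4}`. -/
theorem interCard_two_implies (n : ℕ)
    (C₀ : Submodule (ZMod 2) (Fin n → ZMod 2))
    (hmin : ∀ y ∈ C₀, y ≠ 0 → 4 ≤ wt y)
    (y y' : Fin n → ZMod 2) (hy : y ∈ C₀) (hy' : y' ∈ C₀)
    (hy4 : wt y = 4) (hy'4 : wt y' = 4)
    (z z' : Fin n → ZMod 2) (hz : z ∈ evenCode n) (hz' : z' ∈ evenCode n)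
    (hzy : ∀ i, z i ≠ 0 → y i ≠ 0) (hzy' : ∀ i, z' i ≠ 0 → y' i ≠ 0)
    (hu : interCard (emap y + dbl z) (emap y' + dbl z') = 2) :
    interCard y y' = 2 ∨ interCard y y' = 4 := by
  have hone : ∀ a : ZMod 2, a ≠ 0 → a = 1 := by decide
  have haz : ∀ a b : ZMod 2, a = 0 → b = 0 → a + b = 0 := by decide
  have h11 : (1 : ZMod 2) + 1 = 0 := by decide
  -- the key lower bound : 2 ≤ interCard y y'
  have hle : 2 ≤ interCard y y' := by
    rw [← hu]
    refine Finset.card_le_card_of_injOn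
      (fun i => ⟨(i : ℕ) / 2, by have := i.isLt; omega⟩) ?_ ?_
    · intro i hi
      simp only [Finset.mem_coe, Finset.mem_filter, Finset.mem_univ, true_and] at hi ⊢
      set k : Fin n := (⟨(i : ℕ) / 2, by have := i.isLt; omega⟩ : Fin n) with hkdef
      obtain ⟨h1, h2⟩ := hi
      by_cases h : (i : ℕ) % 2 = 1
      · rw [eval_odd y z i h k rfl] at h1
        rw [eval_odd y' z' i h k rfl] at h2
        refine ⟨fun hyk => ?_, fun hyk => ?_⟩
        · exact h1 (haz _ _ hyk (by by_contra hzk; exact (hzy k hzk) hyk))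
        · exact h2 (haz _ _ hyk (by by_contra hzk; exact (hzy' k hzk) hyk))
      · rw [eval_even y z i (by omega) k rfl] at h1
        rw [eval_even y' z' i (by omega) k rfl] at h2
        exact ⟨hzy k h1, hzy' k h2⟩
    · intro i₁ hi₁ i₂ hi₂ hk
      simp only [Finset.mem_coe, Finset.mem_filter, Finset.mem_univ, true_and] at hi₁ hi₂
      have hk' : (i₁ : ℕ) / 2 = (i₂ : ℕ) / 2 := congrArg Fin.val hk
      by_contra hne
      have hne' : (i₁ : ℕ) ≠ (i₂ : ℕ) := fun h => hne (Fin.ext h)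
      set k : Fin n := (⟨(i₁ : ℕ) / 2, by have := i₁.isLt; omega⟩ : Fin n) with hkdef
      have hk2 : (k : ℕ) = (i₂ : ℕ) / 2 := by rw [hkdef]; exact hk'
      -- a generic contradiction from one even and one odd index over the same k
      have main : ∀ (a b : Fin (2 * n)), (a : ℕ) % 2 = 0 → (b : ℕ) % 2 = 1 →
          (k : ℕ) = (a : ℕ) / 2 → (k : ℕ) = (b : ℕ) / 2 →
          ((emap y + dbl z) a ≠ 0 ∧ (emap y' + dbl z') a ≠ 0) →
          ((emap y + dbl z) b ≠ 0 ∧ (emap y' + dbl z') b ≠ 0) → False := by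
        intro a b ha hb hka hkb hA hB
        rw [eval_even y z a ha k hka] at hA
        rw [eval_odd y z b hb k hkb] at hB
        have hzk : z k = 1 := hone _ hA.1
        have hyk : y k = 1 := hone _ (hzy k hA.1)
        rw [hyk, hzk, h11] at hB
        exact hB.1 rfl
      have hcases : ((i₁ : ℕ) % 2 = 0 ∧ (i₂ : ℕ) % 2 = 1) ∨
          ((i₁ : ℕ) % 2 = 1 ∧ (i₂ : ℕ) % 2 = 0) := by omega
      rcases hcases with ⟨h1, h2⟩ | ⟨h1, h2⟩
      · exact main i₁ i₂ h1 h2 rfl hk2 hi₁ hi₂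
      · exact main i₂ i₁ h2 h1 hk2 rfl hi₂ hi₁
  -- now the weight argument
  have key := wt_add_aux y y'
  rw [hy4, hy'4] at key
  by_cases hyy : y + y' = 0
  · right
    have heq : y = y' := by
      funext i
      have hpt : ∀ a b : ZMod 2, a + b = 0 → a = b := by decide
      exact hpt _ _ (congrFun hyy i)
    rw [heq, interCard_self, hy'4]
  · left
    have h4 : 4 ≤ wt (y + y') := hmin _ (C₀.add_mem hy hy') hyy
    omega
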